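/- Let d = 2cos(π/k), k ≥ 3, and for each ℓ ∈ {1,...,k-1} let p_ℓ be the rank-one projection M_ℓ/d (path-model block of E_i at height ℓ). Then the operators Φ_i defined blockwise by these projections (scaled by d) satisfy the Temperley-Lieb relation Φ_iΦ_{i+1}Φ_i = Φ_i on the path space H_{n,k}. -/

import Mathlib

open scoped Classical

/-- `λ_ℓ = sin(πℓ/k)` for `ℓ ∈ {1,...,k-1}`, and `0` otherwise. -/
noncomputable def lam (k : ℕ) (m : ℤ) : ℝ :=
  if 1 ≤ m ∧ m ≤ (k : ℤ) - 1 then Real.sin (Real.pi * m / k) else 0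

/-- Read bit `m` of an `n`-bit string (default `false` out of range). -/
def bit {n : ℕ} (x : Fin n → Bool) (m : ℕ) : Bool :=
  if h : m < n then x ⟨m, h⟩ else false

/-- The vertex of the line graph `G_k` reached after the first `i` steps of the
bit string `x` (a `1` is a step right, a `0` a step left), starting at vertex `1`. -/
def ht {n : ℕ} (x : Fin n → Bool) (i : ℕ) : ℤ :=
  1 + ∑ j : Fin n, if (j : ℕ) < i then (if x j then 1 else -1) else 0

/-- `x` encodes a path on `G_k`: it starts at vertex `1` and stays in `{1,...,k-1}`. -/
def validPath (k : ℕ) {n : ℕ} (x : Fin n → Bool) : Prop :=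
  ∀ i : Fin (n + 1), 1 ≤ ht x (i : ℕ) ∧ ht x (i : ℕ) ≤ (k : ℤ) - 1

/-- The path-model operator `Φ_i` (`0`-indexed: it acts on qubits `i, i+1`), as a
matrix on the space spanned by `n`-bit strings.  It is supported on valid paths,
annihilates `|00⟩` and `|11⟩` on qubits `i,i+1`, and acts on the span of `|01⟩,|10⟩`
at height `z` (the vertex reached after the first `i` steps) by the 2×2 matrix with
diagonal `λ_{z-1}/λ_z, λ_{z+1}/λ_z` and off-diagonal `sqrt(λ_{z+1}λ_{z-1})/λ_z`. -/
noncomputable def PhiMat (k n : ℕ) (i : ℕ) : Matrix (Fin n → Bool) (Fin n → Bool) ℂ :=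
  fun x y =>
    if (∀ j : Fin n, (j : ℕ) ≠ i → (j : ℕ) ≠ i + 1 → x j = y j) ∧
        validPath k x ∧ validPath k y then
      (match (bit x i, bit x (i + 1)), (bit y i, bit y (i + 1)) with
        | (false, true), (false, true) =>
            ((lam k (ht y i - 1) / lam k (ht y i) : ℝ) : ℂ)
        | (true, false), (true, false) =>
            ((lam k (ht y i + 1) / lam k (ht y i) : ℝ) : ℂ)
        | (false, true), (true, false) =>
            ((Real.sqrt (lam k (ht y i + 1) * lam k (ht y i - 1)) / lam k (ht y i) : ℝ) : ℂ)
        | (true, false), (false, true) =>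
            ((Real.sqrt (lam k (ht y i + 1) * lam k (ht y i - 1)) / lam k (ht y i) : ℝ) : ℂ)
        | _, _ => (0 : ℂ))
    else 0

namespace TLAux

variable {n : ℕ}

def flip2 (i : ℕ) (x : Fin n → Bool) : Fin n → Bool :=
  fun j => if (j : ℕ) = i ∨ (j : ℕ) = i + 1 then !(x j) else x j

lemma flip2_apply_of_ne (i : ℕ) (x : Fin n → Bool) (j : Fin n)
    (h0 : (j : ℕ) ≠ i) (h1 : (j : ℕ) ≠ i + 1) : flip2 i x j = x j := by
  simp [flip2, h0, h1]

lemma flip2_flip2 (i : ℕ) (x : Fin n → Bool) : flip2 i (flip2 i x) = x := by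
  funext j; by_cases h : (j : ℕ) = i ∨ (j : ℕ) = i + 1 <;> simp [flip2, h]

lemma bit_lt {x : Fin n → Bool} {m : ℕ} (h : m < n) : bit x m = x ⟨m, h⟩ := dif_pos h

lemma bit_flip2_i {i : ℕ} (h : i < n) (x : Fin n → Bool) :
    bit (flip2 i x) i = !(bit x i) := by
  rw [bit_lt h, bit_lt h]; simp [flip2]

lemma bit_flip2_i1 {i : ℕ} (h : i + 1 < n) (x : Fin n → Bool) :
    bit (flip2 i x) (i + 1) = !(bit x (i + 1)) := by
  rw [bit_lt h, bit_lt h]; simp [flip2]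

lemma bit_flip2_ne {i m : ℕ} (x : Fin n → Bool) (h0 : m ≠ i) (h1 : m ≠ i + 1) :
    bit (flip2 i x) m = bit x m := by
  unfold bit; split
  · exact flip2_apply_of_ne _ _ _ h0 h1
  · rfl

lemma bool_ne {a b : Bool} (h : a ≠ b) : a = !b := by cases a <;> cases b <;> simp_all

lemma ht_congr {x y : Fin n → Bool} {m : ℕ}
    (h : ∀ j : Fin n, (j : ℕ) < m → x j = y j) : ht x m = ht y m := by
  unfold ht; congr 1; apply Finset.sum_congr rfl; intro j _
  by_cases hj : (j : ℕ) < m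
  · simp [hj, h j hj]
  · simp [hj]

lemma ht_succ {x : Fin n → Bool} {m : ℕ} (h : m < n) :
    ht x (m + 1) = ht x m + (if x ⟨m, h⟩ then 1 else -1) := by
  unfold ht
  have key : ∀ j : Fin n, (if (j : ℕ) < m + 1 then (if x j then (1 : ℤ) else -1) else 0)
      = (if (j : ℕ) < m then (if x j then (1 : ℤ) else -1) else 0)
        + (if j = ⟨m, h⟩ then (if x j then (1 : ℤ) else -1) else 0) := by
    intro j
    rcases lt_trichotomy (j : ℕ) m with hj | hj | hj
    · have h2 : ¬ j = (⟨m, h⟩ : Fin n) := by intro hEq; subst hEq; simp at hj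
      have h1 : (j : ℕ) < m + 1 := by omega
      simp [h1, hj, h2]
    · have hEq : j = (⟨m, h⟩ : Fin n) := Fin.ext hj
      subst hEq
      simp
    · have h2 : ¬ j = (⟨m, h⟩ : Fin n) := by intro hEq; subst hEq; simp at hj
      have h1 : ¬ (j : ℕ) < m + 1 := by omega
      have h3 : ¬ (j : ℕ) < m := by omega
      simp [h1, h3, h2]
  rw [Finset.sum_congr rfl (fun j _ => key j), Finset.sum_add_distrib,
    Finset.sum_ite_eq' Finset.univ (⟨m, h⟩ : Fin n)]
  simp; ring

lemma ht_succ_bit {x : Fin n → Bool} {m : ℕ} (h : m < n) :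
    ht x (m + 1) = ht x m + (if bit x m then 1 else -1) := by
  rw [ht_succ h, bit_lt h]

lemma ht_eq_from {x y : Fin n → Bool} {m0 m : ℕ} (hm : m0 ≤ m) (hmn : m ≤ n)
    (h0 : ht x m0 = ht y m0)
    (hag : ∀ j : Fin n, m0 ≤ (j : ℕ) → x j = y j) : ht x m = ht y m := by
  induction m, hm using Nat.le_induction with
  | base => exact h0
  | succ m hm ih =>
      have hmn' : m < n := by omega
      rw [ht_succ (x := x) hmn', ht_succ (x := y) hmn', ih (by omega),
        hag ⟨m, hmn'⟩ (by simpa using hm)]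

lemma ht_flip2_i2 {i : ℕ} (h : i + 1 < n) (x : Fin n → Bool)
    (hne : bit x i ≠ bit x (i + 1)) :
    ht (flip2 i x) (i + 2) = ht x (i + 2) := by
  have h0 : i < n := by omega
  have e1 : flip2 i x ⟨i, h0⟩ = !(x ⟨i, h0⟩) := by simp [flip2]
  have e2 : flip2 i x ⟨i + 1, h⟩ = !(x ⟨i + 1, h⟩) := by simp [flip2]
  have hc : ht (flip2 i x) i = ht x i :=
    ht_congr (fun j hj => flip2_apply_of_ne _ _ _ (by omega) (by omega))
  rw [show i + 2 = i + 1 + 1 from rfl, ht_succ (x := flip2 i x) h, ht_succ (x := x) h,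
    ht_succ (x := flip2 i x) h0, ht_succ (x := x) h0, hc, e1, e2]
  rw [bit_lt h0, bit_lt h] at hne
  cases hx0 : x ⟨i, h0⟩ <;> cases hx1 : x ⟨i + 1, h⟩ <;> simp_all <;> ring

lemma validPath_flip2 {k i : ℕ} {x : Fin n → Bool} (h2 : i + 2 ≤ n)
    (hne : bit x i ≠ bit x (i + 1)) (hx : validPath k x)
    (hmid1 : 1 ≤ ht (flip2 i x) (i + 1)) (hmid2 : ht (flip2 i x) (i + 1) ≤ (k : ℤ) - 1) :
    validPath k (flip2 i x) := by
  intro m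
  rcases lt_trichotomy (m : ℕ) (i + 1) with hm | hm | hm
  · have : ht (flip2 i x) (m : ℕ) = ht x (m : ℕ) :=
      ht_congr (fun j hj => flip2_apply_of_ne _ _ _ (by omega) (by omega))
    rw [this]; exact hx m
  · rw [hm]; exact ⟨hmid1, hmid2⟩
  · have : ht (flip2 i x) (m : ℕ) = ht x (m : ℕ) := by
      apply ht_eq_from (m0 := i + 2) (by omega) (by exact Fin.is_le m)
        (ht_flip2_i2 (by omega) x hne)
      intro j hj
      exact flip2_apply_of_ne _ _ _ (by omega) (by omega)
    rw [this]; exact hx m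

lemma lam_nonneg (k : ℕ) (m : ℤ) : 0 ≤ lam k m := by
  unfold lam; split
  · rename_i hm
    have hk : (1 : ℤ) ≤ (k : ℤ) - 1 := le_trans hm.1 hm.2
    have hk0 : (0 : ℝ) < (k : ℝ) := by exact_mod_cast (by omega : (0:ℤ) < (k:ℤ))
    apply Real.sin_nonneg_of_nonneg_of_le_pi
    · have hm0 : (0 : ℝ) ≤ (m : ℝ) := by exact_mod_cast le_trans zero_le_one hm.1
      positivity
    · rw [div_le_iff₀ hk0]
      have : (m : ℝ) ≤ (k : ℝ) := by exact_mod_cast (by omega : m ≤ (k : ℤ))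
      nlinarith [Real.pi_pos]
  · exact le_refl 0

lemma lam_pos {k : ℕ} {m : ℤ} (h1 : 1 ≤ m) (h2 : m ≤ (k : ℤ) - 1) : 0 < lam k m := by
  unfold lam; rw [if_pos ⟨h1, h2⟩]
  have hk0 : (0 : ℝ) < (k : ℝ) := by exact_mod_cast (by omega : (0:ℤ) < (k:ℤ))
  apply Real.sin_pos_of_pos_of_lt_pi
  · have hm0 : (0 : ℝ) < (m : ℝ) := by exact_mod_cast (by omega : (0:ℤ) < m)
    positivity
  · rw [div_lt_iff₀ hk0]
    have : (m : ℝ) < (k : ℝ) := by exact_mod_cast (by omega : m < (k : ℤ))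
    nlinarith [Real.pi_pos]


section Phi
variable {k n i : ℕ} {x y : Fin n → Bool}

lemma phi_zero_invalid_left (h : ¬ validPath k x) (y : Fin n → Bool) :
    PhiMat k n i x y = 0 := by
  unfold PhiMat; rw [if_neg]; tauto

lemma phi_zero_xbits (h : bit x i = bit x (i + 1)) (y : Fin n → Bool) :
    PhiMat k n i x y = 0 := by
  unfold PhiMat; split
  · rw [← h]
    cases bit x i <;> cases bit y i <;> cases bit y (i + 1) <;> rfl
  · rfl

lemma phi_zero_ybits (h : bit y i = bit y (i + 1)) :
    PhiMat k n i x y = 0 := by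
  unfold PhiMat; split
  · rw [← h]
    cases bit y i <;> cases bit x i <;> cases bit x (i + 1) <;> rfl
  · rfl

lemma phi_FT_FT (hag : ∀ j : Fin n, (j : ℕ) ≠ i → (j : ℕ) ≠ i + 1 → x j = y j)
    (hx : validPath k x) (hy : validPath k y)
    (h1 : bit x i = false) (h2 : bit x (i + 1) = true)
    (h3 : bit y i = false) (h4 : bit y (i + 1) = true) :
    PhiMat k n i x y = ((lam k (ht y i - 1) / lam k (ht y i) : ℝ) : ℂ) := by
  unfold PhiMat; rw [if_pos ⟨hag, hx, hy⟩, h1, h2, h3, h4]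

lemma phi_TF_TF (hag : ∀ j : Fin n, (j : ℕ) ≠ i → (j : ℕ) ≠ i + 1 → x j = y j)
    (hx : validPath k x) (hy : validPath k y)
    (h1 : bit x i = true) (h2 : bit x (i + 1) = false)
    (h3 : bit y i = true) (h4 : bit y (i + 1) = false) :
    PhiMat k n i x y = ((lam k (ht y i + 1) / lam k (ht y i) : ℝ) : ℂ) := by
  unfold PhiMat; rw [if_pos ⟨hag, hx, hy⟩, h1, h2, h3, h4]

lemma phi_FT_TF (hag : ∀ j : Fin n, (j : ℕ) ≠ i → (j : ℕ) ≠ i + 1 → x j = y j)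
    (hx : validPath k x) (hy : validPath k y)
    (h1 : bit x i = false) (h2 : bit x (i + 1) = true)
    (h3 : bit y i = true) (h4 : bit y (i + 1) = false) :
    PhiMat k n i x y
      = ((Real.sqrt (lam k (ht y i + 1) * lam k (ht y i - 1)) / lam k (ht y i) : ℝ) : ℂ) := by
  unfold PhiMat; rw [if_pos ⟨hag, hx, hy⟩, h1, h2, h3, h4]

lemma phi_TF_FT (hag : ∀ j : Fin n, (j : ℕ) ≠ i → (j : ℕ) ≠ i + 1 → x j = y j)
    (hx : validPath k x) (hy : validPath k y)
    (h1 : bit x i = true) (h2 : bit x (i + 1) = false)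
    (h3 : bit y i = false) (h4 : bit y (i + 1) = true) :
    PhiMat k n i x y
      = ((Real.sqrt (lam k (ht y i + 1) * lam k (ht y i - 1)) / lam k (ht y i) : ℝ) : ℂ) := by
  unfold PhiMat; rw [if_pos ⟨hag, hx, hy⟩, h1, h2, h3, h4]

lemma mulVec_eq_zero_of_row {M : Matrix (Fin n → Bool) (Fin n → Bool) ℂ} {x : Fin n → Bool}
    (h : ∀ y, M x y = 0) (u : (Fin n → Bool) → ℂ) : M.mulVec u x = 0 := by
  simp [Matrix.mulVec, dotProduct, h]

lemma sum_eq_pair {α M : Type*} [Fintype α] [DecidableEq α] [AddCommMonoid M]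
    (f : α → M) (a b : α) (hab : a ≠ b) (h : ∀ c, c ≠ a → c ≠ b → f c = 0) :
    ∑ c, f c = f a + f b := by
  rw [← Finset.sum_pair hab]
  symm
  apply Finset.sum_subset (Finset.subset_univ _)
  intro c _ hc
  simp only [Finset.mem_insert, Finset.mem_singleton, not_or] at hc
  exact h c hc.1 hc.2

lemma eq_of_bits (hin : i + 1 < n)
    (hag : ∀ j : Fin n, (j : ℕ) ≠ i → (j : ℕ) ≠ i + 1 → x j = y j)
    (h1 : bit x i = bit y i) (h2 : bit x (i + 1) = bit y (i + 1)) : x = y := by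
  have hi0 : i < n := by omega
  funext j
  by_cases hj0 : (j : ℕ) = i
  · have : j = (⟨i, hi0⟩ : Fin n) := Fin.ext hj0
    subst this
    rw [bit_lt hi0, bit_lt hi0] at h1; exact h1
  by_cases hj1 : (j : ℕ) = i + 1
  · have : j = (⟨i + 1, hin⟩ : Fin n) := Fin.ext hj1
    subst this
    rw [bit_lt hin, bit_lt hin] at h2; exact h2
  exact hag j hj0 hj1

lemma phi_mulVec_apply (hin : i + 1 < n) (hb : bit x i ≠ bit x (i + 1))
    (u : (Fin n → Bool) → ℂ) :
    (PhiMat k n i).mulVec u x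
      = PhiMat k n i x x * u x + PhiMat k n i x (flip2 i x) * u (flip2 i x) := by
  have hi0 : i < n := by omega
  have hxflip : x ≠ flip2 i x := by
    intro h
    have := congrFun h ⟨i, hi0⟩
    simp [flip2] at this
  show ∑ y, PhiMat k n i x y * u y = _
  apply sum_eq_pair _ x (flip2 i x) hxflip
  intro y hy1 hy2
  have hzero : PhiMat k n i x y = 0 := by
    by_cases hag : ∀ j : Fin n, (j : ℕ) ≠ i → (j : ℕ) ≠ i + 1 → x j = y j
    · by_cases h1 : bit y i = bit x i
      · by_cases h2 : bit y (i + 1) = bit x (i + 1)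
        · exact absurd (eq_of_bits hin hag h1.symm h2.symm).symm hy1
        · apply phi_zero_ybits
          rw [h1, bool_ne h2, ← bool_ne hb]
      · by_cases h2 : bit y (i + 1) = bit x (i + 1)
        · apply phi_zero_ybits
          rw [h2, bool_ne h1, bool_ne hb]
          exact (Bool.not_not _)
        · exfalso; apply hy2
          apply eq_of_bits hin (x := y) (y := flip2 i x)
          · intro j hj0 hj1
            rw [← hag j hj0 hj1, flip2_apply_of_ne _ _ _ hj0 hj1]
          · rw [bit_flip2_i hi0, bool_ne h1]
          · rw [bit_flip2_i1 hin, bool_ne h2]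
    · unfold PhiMat; rw [if_neg]; tauto
  rw [hzero, zero_mul]

end Phi
end TLAux

open TLAux

/-- for `d = 2cos(π/k)`, `k ≥ 3`, the path-model operators `Φ_i`
(built blockwise from the rank-one projections `M_ℓ/d` scaled by `d`) satisfy the
Temperley-Lieb relation `Φ_i Φ_{i+1} Φ_i = Φ_i` on the path space `H_{n,k}`, i.e.
on vectors supported on valid path strings. -/
theorem PhiMat_TL_relation (n k : ℕ) (hk : 3 ≤ k) (i : ℕ) (hi : i + 2 < n)
    (v : (Fin n → Bool) → ℂ) (hv : ∀ x, ¬ validPath k x → v x = 0) :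
    (PhiMat k n i * PhiMat k n (i + 1) * PhiMat k n i).mulVec v =
      (PhiMat k n i).mulVec v := by
  classical
  have hi0 : i < n := by omega
  have hi1 : i + 1 < n := by omega
  rw [← Matrix.mulVec_mulVec, ← Matrix.mulVec_mulVec]
  funext x
  by_cases hvx : validPath k x
  swap
  · rw [mulVec_eq_zero_of_row (phi_zero_invalid_left hvx) _,
        mulVec_eq_zero_of_row (phi_zero_invalid_left hvx) _]
  by_cases hbx : bit x i = bit x (i + 1)
  · rw [mulVec_eq_zero_of_row (phi_zero_xbits hbx) _,
        mulVec_eq_zero_of_row (phi_zero_xbits hbx) _]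
  rw [phi_mulVec_apply hi1 hbx, phi_mulVec_apply hi1 hbx]
  have hagx' : ∀ j : Fin n, (j : ℕ) ≠ i → (j : ℕ) ≠ i + 1 → x j = flip2 i x j :=
    fun j h0 h1 => (flip2_apply_of_ne i x j h0 h1).symm
  have hagx'x : ∀ j : Fin n, (j : ℕ) ≠ i → (j : ℕ) ≠ i + 1 → flip2 i x j = x j :=
    fun j h0 h1 => flip2_apply_of_ne i x j h0 h1
  have hz : 1 ≤ ht x i ∧ ht x i ≤ (k : ℤ) - 1 := hvx ⟨i, by omega⟩
  have hbx1 : bit x (i + 1) = !(bit x i) := bool_ne (Ne.symm hbx)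
  have hbx'0 : bit (flip2 i x) i = !(bit x i) := bit_flip2_i hi0 x
  have hbx'1 : bit (flip2 i x) (i + 1) = !(bit x (i + 1)) := bit_flip2_i1 hi1 x
  have hbx'2 : bit (flip2 i x) (i + 2) = bit x (i + 2) := bit_flip2_ne x (by omega) (by omega)
  have ez : ht (flip2 i x) i = ht x i :=
    ht_congr (fun j hj => flip2_apply_of_ne _ _ _ (by omega) (by omega))
  have h3' := hvx ⟨i + 3, by omega⟩
  have hflipflip : flip2 i (flip2 i x) = x := flip2_flip2 i x
  have hb0 : lam k (ht x i) ≠ 0 := ne_of_gt (lam_pos hz.1 hz.2)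
  have hb0' : ((lam k (ht x i) : ℝ) : ℂ) ≠ 0 := by exact_mod_cast hb0
  cases hxi : bit x i <;> cases hc : bit x (i + 2)
  case' neg.false.true =>
    -- x = (F, T, T)
    have hx1 : bit x (i + 1) = true := by rw [hbx1, hxi]; rfl
    have e1 : ht x (i + 1) = ht x i - 1 := by rw [ht_succ_bit hi0, hxi]; norm_num <;> ring
    have e2 : ht x (i + 2) = ht x i := by
      rw [show i + 2 = i + 1 + 1 from rfl, ht_succ_bit hi1, hx1, e1]; norm_num <;> ring
    have e3 : ht x (i + 3) = ht x i + 1 := by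
      rw [show i + 3 = i + 2 + 1 from rfl, ht_succ_bit hi, hc, e2]; norm_num <;> ring
    have h3 : 1 ≤ ht x i + 1 ∧ ht x i + 1 ≤ (k : ℤ) - 1 := by rw [← e3]; exact h3'
    have hbx'0' : bit (flip2 i x) i = true := by rw [hbx'0, hxi]; rfl
    have hbx'1' : bit (flip2 i x) (i + 1) = false := by rw [hbx'1, hx1]; rfl
    have hbx'2' : bit (flip2 i x) (i + 2) = true := by rw [hbx'2, hc]
    have e1' : ht (flip2 i x) (i + 1) = ht x i + 1 := by
      rw [ht_succ_bit hi0, hbx'0', ez]; norm_num <;> ring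
    have hvx' : validPath k (flip2 i x) := validPath_flip2 (by omega) hbx hvx
      (by rw [e1']; exact h3.1) (by rw [e1']; exact h3.2)
    have hu2x : (PhiMat k n (i + 1)).mulVec ((PhiMat k n i).mulVec v) x = 0 :=
      mulVec_eq_zero_of_row
        (phi_zero_xbits (by rw [hx1, show i + 1 + 1 = i + 2 from rfl, hc])) _
    have hbne' : bit (flip2 i x) (i + 1) ≠ bit (flip2 i x) (i + 1 + 1) := by
      rw [hbx'1', show i + 1 + 1 = i + 2 from rfl, hbx'2']; simp
    have hu2x' := phi_mulVec_apply (k := k) hi hbne' ((PhiMat k n i).mulVec v)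
    have hx'' : ((PhiMat k n i).mulVec v) (flip2 (i + 1) (flip2 i x)) = 0 :=
      mulVec_eq_zero_of_row (phi_zero_xbits (by
        rw [bit_flip2_ne _ (by omega) (by omega), bit_flip2_i hi1, hbx'0', hbx'1']; rfl)) _
    have hu1x' : ((PhiMat k n i).mulVec v) (flip2 i x)
        = PhiMat k n i (flip2 i x) (flip2 i x) * v (flip2 i x)
          + PhiMat k n i (flip2 i x) x * v x := by
      have h := phi_mulVec_apply (k := k) hi1 (x := flip2 i x)
        (by rw [hbx'0', hbx'1']; simp) v
      rwa [hflipflip] at h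
    have Exx : PhiMat k n i x x = ((lam k (ht x i - 1) / lam k (ht x i) : ℝ) : ℂ) :=
      phi_FT_FT (fun j _ _ => rfl) hvx hvx hxi hx1 hxi hx1
    have Exx' : PhiMat k n i x (flip2 i x)
        = ((Real.sqrt (lam k (ht x i + 1) * lam k (ht x i - 1)) / lam k (ht x i) : ℝ) : ℂ) := by
      have h := phi_FT_TF hagx' hvx hvx' hxi hx1 hbx'0' hbx'1'
      rwa [ez] at h
    have Ex'x' : PhiMat k n i (flip2 i x) (flip2 i x)
        = ((lam k (ht x i + 1) / lam k (ht x i) : ℝ) : ℂ) := by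
      have h := phi_TF_TF (fun j _ _ => rfl) hvx' hvx' hbx'0' hbx'1' hbx'0' hbx'1'
      rwa [ez] at h
    have Ex'x : PhiMat k n i (flip2 i x) x
        = ((Real.sqrt (lam k (ht x i + 1) * lam k (ht x i - 1)) / lam k (ht x i) : ℝ) : ℂ) :=
      phi_TF_FT hagx'x hvx' hvx hbx'0' hbx'1' hxi hx1
    have E' : PhiMat k n (i + 1) (flip2 i x) (flip2 i x)
        = ((lam k (ht x i) / lam k (ht x i + 1) : ℝ) : ℂ) := by
      have h := phi_FT_FT (i := i + 1) (x := flip2 i x) (y := flip2 i x)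
        (fun j _ _ => rfl) hvx' hvx' hbx'1'
        (by rw [show i + 1 + 1 = i + 2 from rfl]; exact hbx'2') hbx'1'
        (by rw [show i + 1 + 1 = i + 2 from rfl]; exact hbx'2')
      rw [e1'] at h
      have e : ht x i + 1 - 1 = ht x i := by ring
      rwa [e] at h
    rw [hu2x, hu2x', hx'', hu1x', Exx, Exx', Ex'x', Ex'x, E']
    have hc0 : lam k (ht x i + 1) ≠ 0 := ne_of_gt (lam_pos h3.1 h3.2)
    have hc0' : ((lam k (ht x i + 1) : ℝ) : ℂ) ≠ 0 := by exact_mod_cast hc0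
    have hS' : ((Real.sqrt (lam k (ht x i + 1) * lam k (ht x i - 1)) : ℝ) : ℂ) ^ 2
        = ((lam k (ht x i + 1) : ℝ) : ℂ) * ((lam k (ht x i - 1) : ℝ) : ℂ) := by
      have hS : Real.sqrt (lam k (ht x i + 1) * lam k (ht x i - 1)) ^ 2
          = lam k (ht x i + 1) * lam k (ht x i - 1) :=
        Real.sq_sqrt (mul_nonneg (lam_nonneg _ _) (lam_nonneg _ _))
      exact_mod_cast congrArg Complex.ofReal hS
    simp only [mul_zero, zero_mul, add_zero, zero_add]
    push_cast
    field_simp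
    linear_combination (v x) * hS'
  case' neg.false.false =>
    have hx1 : bit x (i + 1) = true := by rw [hbx1, hxi]; rfl
    have e1 : ht x (i + 1) = ht x i - 1 := by rw [ht_succ_bit hi0, hxi]; norm_num <;> ring
    have e2 : ht x (i + 2) = ht x i := by
      rw [show i + 2 = i + 1 + 1 from rfl, ht_succ_bit hi1, hx1, e1]; norm_num <;> ring
    have e3 : ht x (i + 3) = ht x i - 1 := by
      rw [show i + 3 = i + 2 + 1 from rfl, ht_succ_bit hi, hc, e2]; norm_num <;> ring
    have h3 : 1 ≤ ht x i - 1 ∧ ht x i - 1 ≤ (k : ℤ) - 1 := by rw [← e3]; exact h3'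
    have hbx'1' : bit (flip2 i x) (i + 1) = false := by rw [hbx'1, hx1]; rfl
    have hbx'2' : bit (flip2 i x) (i + 2) = false := by rw [hbx'2, hc]
    have hu2x' : (PhiMat k n (i + 1)).mulVec ((PhiMat k n i).mulVec v) (flip2 i x) = 0 :=
      mulVec_eq_zero_of_row (phi_zero_xbits (by
        rw [hbx'1', show i + 1 + 1 = i + 2 from rfl, hbx'2'])) _
    have hbne : bit x (i + 1) ≠ bit x (i + 1 + 1) := by
      rw [hx1, show i + 1 + 1 = i + 2 from rfl, hc]; simp
    have hu2x := phi_mulVec_apply (k := k) hi hbne ((PhiMat k n i).mulVec v)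
    have hxt : ((PhiMat k n i).mulVec v) (flip2 (i + 1) x) = 0 :=
      mulVec_eq_zero_of_row (phi_zero_xbits (by
        rw [bit_flip2_ne _ (by omega) (by omega), bit_flip2_i hi1, hxi, hx1]; rfl)) _
    have E' : PhiMat k n (i + 1) x x = ((lam k (ht x i) / lam k (ht x i - 1) : ℝ) : ℂ) := by
      have h := phi_TF_TF (i := i + 1) (x := x) (y := x) (fun j _ _ => rfl) hvx hvx hx1
        (by rw [show i + 1 + 1 = i + 2 from rfl]; exact hc) hx1
        (by rw [show i + 1 + 1 = i + 2 from rfl]; exact hc)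
      rw [e1] at h
      have e : ht x i - 1 + 1 = ht x i := by ring
      rwa [e] at h
    have Exx : PhiMat k n i x x = ((lam k (ht x i - 1) / lam k (ht x i) : ℝ) : ℂ) :=
      phi_FT_FT (fun j _ _ => rfl) hvx hvx hxi hx1 hxi hx1
    have hu1x := phi_mulVec_apply (k := k) hi1 hbx v
    rw [hu2x', hu2x, hxt, hu1x, Exx, E']
    have ha0' : ((lam k (ht x i - 1) : ℝ) : ℂ) ≠ 0 := by
      exact_mod_cast ne_of_gt (lam_pos h3.1 h3.2)
    simp only [mul_zero, zero_mul, add_zero, zero_add]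
    push_cast
    field_simp
  case' neg.true.false =>
    have hx1 : bit x (i + 1) = false := by rw [hbx1, hxi]; rfl
    have e1 : ht x (i + 1) = ht x i + 1 := by rw [ht_succ_bit hi0, hxi]; norm_num <;> ring
    have e2 : ht x (i + 2) = ht x i := by
      rw [show i + 2 = i + 1 + 1 from rfl, ht_succ_bit hi1, hx1, e1]; norm_num <;> ring
    have e3 : ht x (i + 3) = ht x i - 1 := by
      rw [show i + 3 = i + 2 + 1 from rfl, ht_succ_bit hi, hc, e2]; norm_num <;> ring
    have h3 : 1 ≤ ht x i - 1 ∧ ht x i - 1 ≤ (k : ℤ) - 1 := by rw [← e3]; exact h3'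
    have hbx'0' : bit (flip2 i x) i = false := by rw [hbx'0, hxi]; rfl
    have hbx'1' : bit (flip2 i x) (i + 1) = true := by rw [hbx'1, hx1]; rfl
    have hbx'2' : bit (flip2 i x) (i + 2) = false := by rw [hbx'2, hc]
    have e1' : ht (flip2 i x) (i + 1) = ht x i - 1 := by
      rw [ht_succ_bit hi0, hbx'0', ez]; norm_num <;> ring
    have hvx' : validPath k (flip2 i x) := validPath_flip2 (by omega) hbx hvx
      (by rw [e1']; exact h3.1) (by rw [e1']; exact h3.2)
    have hu2x : (PhiMat k n (i + 1)).mulVec ((PhiMat k n i).mulVec v) x = 0 :=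
      mulVec_eq_zero_of_row
        (phi_zero_xbits (by rw [hx1, show i + 1 + 1 = i + 2 from rfl, hc])) _
    have hbne' : bit (flip2 i x) (i + 1) ≠ bit (flip2 i x) (i + 1 + 1) := by
      rw [hbx'1', show i + 1 + 1 = i + 2 from rfl, hbx'2']; simp
    have hu2x' := phi_mulVec_apply (k := k) hi hbne' ((PhiMat k n i).mulVec v)
    have hx'' : ((PhiMat k n i).mulVec v) (flip2 (i + 1) (flip2 i x)) = 0 :=
      mulVec_eq_zero_of_row (phi_zero_xbits (by
        rw [bit_flip2_ne _ (by omega) (by omega), bit_flip2_i hi1, hbx'0', hbx'1']; rfl)) _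
    have hu1x' : ((PhiMat k n i).mulVec v) (flip2 i x)
        = PhiMat k n i (flip2 i x) (flip2 i x) * v (flip2 i x)
          + PhiMat k n i (flip2 i x) x * v x := by
      have h := phi_mulVec_apply (k := k) hi1 (x := flip2 i x)
        (by rw [hbx'0', hbx'1']; simp) v
      rwa [hflipflip] at h
    have Exx : PhiMat k n i x x = ((lam k (ht x i + 1) / lam k (ht x i) : ℝ) : ℂ) :=
      phi_TF_TF (fun j _ _ => rfl) hvx hvx hxi hx1 hxi hx1
    have Exx' : PhiMat k n i x (flip2 i x)
        = ((Real.sqrt (lam k (ht x i + 1) * lam k (ht x i - 1)) / lam k (ht x i) : ℝ) : ℂ) := by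
      have h := phi_TF_FT hagx' hvx hvx' hxi hx1 hbx'0' hbx'1'
      rwa [ez] at h
    have Ex'x' : PhiMat k n i (flip2 i x) (flip2 i x)
        = ((lam k (ht x i - 1) / lam k (ht x i) : ℝ) : ℂ) := by
      have h := phi_FT_FT (fun j _ _ => rfl) hvx' hvx' hbx'0' hbx'1' hbx'0' hbx'1'
      rwa [ez] at h
    have Ex'x : PhiMat k n i (flip2 i x) x
        = ((Real.sqrt (lam k (ht x i + 1) * lam k (ht x i - 1)) / lam k (ht x i) : ℝ) : ℂ) :=
      phi_FT_TF hagx'x hvx' hvx hbx'0' hbx'1' hxi hx1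
    have E' : PhiMat k n (i + 1) (flip2 i x) (flip2 i x)
        = ((lam k (ht x i) / lam k (ht x i - 1) : ℝ) : ℂ) := by
      have h := phi_TF_TF (i := i + 1) (x := flip2 i x) (y := flip2 i x)
        (fun j _ _ => rfl) hvx' hvx' hbx'1'
        (by rw [show i + 1 + 1 = i + 2 from rfl]; exact hbx'2') hbx'1'
        (by rw [show i + 1 + 1 = i + 2 from rfl]; exact hbx'2')
      rw [e1'] at h
      have e : ht x i - 1 + 1 = ht x i := by ring
      rwa [e] at h
    rw [hu2x, hu2x', hx'', hu1x', Exx, Exx', Ex'x', Ex'x, E']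
    have ha0' : ((lam k (ht x i - 1) : ℝ) : ℂ) ≠ 0 := by
      exact_mod_cast ne_of_gt (lam_pos h3.1 h3.2)
    have hS' : ((Real.sqrt (lam k (ht x i + 1) * lam k (ht x i - 1)) : ℝ) : ℂ) ^ 2
        = ((lam k (ht x i + 1) : ℝ) : ℂ) * ((lam k (ht x i - 1) : ℝ) : ℂ) := by
      have hS : Real.sqrt (lam k (ht x i + 1) * lam k (ht x i - 1)) ^ 2
          = lam k (ht x i + 1) * lam k (ht x i - 1) :=
        Real.sq_sqrt (mul_nonneg (lam_nonneg _ _) (lam_nonneg _ _))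
      exact_mod_cast congrArg Complex.ofReal hS
    simp only [mul_zero, zero_mul, add_zero, zero_add]
    push_cast
    field_simp
    linear_combination (v x) * hS'
  case' neg.true.true =>
    have hx1 : bit x (i + 1) = false := by rw [hbx1, hxi]; rfl
    have e1 : ht x (i + 1) = ht x i + 1 := by rw [ht_succ_bit hi0, hxi]; norm_num <;> ring
    have e2 : ht x (i + 2) = ht x i := by
      rw [show i + 2 = i + 1 + 1 from rfl, ht_succ_bit hi1, hx1, e1]; norm_num <;> ring
    have e3 : ht x (i + 3) = ht x i + 1 := by
      rw [show i + 3 = i + 2 + 1 from rfl, ht_succ_bit hi, hc, e2]; norm_num <;> ring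
    have h3 : 1 ≤ ht x i + 1 ∧ ht x i + 1 ≤ (k : ℤ) - 1 := by rw [← e3]; exact h3'
    have hbx'1' : bit (flip2 i x) (i + 1) = true := by rw [hbx'1, hx1]; rfl
    have hbx'2' : bit (flip2 i x) (i + 2) = true := by rw [hbx'2, hc]
    have hu2x' : (PhiMat k n (i + 1)).mulVec ((PhiMat k n i).mulVec v) (flip2 i x) = 0 :=
      mulVec_eq_zero_of_row (phi_zero_xbits (by
        rw [hbx'1', show i + 1 + 1 = i + 2 from rfl, hbx'2'])) _
    have hbne : bit x (i + 1) ≠ bit x (i + 1 + 1) := by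
      rw [hx1, show i + 1 + 1 = i + 2 from rfl, hc]; simp
    have hu2x := phi_mulVec_apply (k := k) hi hbne ((PhiMat k n i).mulVec v)
    have hxt : ((PhiMat k n i).mulVec v) (flip2 (i + 1) x) = 0 :=
      mulVec_eq_zero_of_row (phi_zero_xbits (by
        rw [bit_flip2_ne _ (by omega) (by omega), bit_flip2_i hi1, hxi, hx1]; rfl)) _
    have E' : PhiMat k n (i + 1) x x = ((lam k (ht x i) / lam k (ht x i + 1) : ℝ) : ℂ) := by
      have h := phi_FT_FT (i := i + 1) (x := x) (y := x) (fun j _ _ => rfl) hvx hvx hx1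
        (by rw [show i + 1 + 1 = i + 2 from rfl]; exact hc) hx1
        (by rw [show i + 1 + 1 = i + 2 from rfl]; exact hc)
      rw [e1] at h
      have e : ht x i + 1 - 1 = ht x i := by ring
      rwa [e] at h
    have Exx : PhiMat k n i x x = ((lam k (ht x i + 1) / lam k (ht x i) : ℝ) : ℂ) :=
      phi_TF_TF (fun j _ _ => rfl) hvx hvx hxi hx1 hxi hx1
    have hu1x := phi_mulVec_apply (k := k) hi1 hbx v
    rw [hu2x', hu2x, hxt, hu1x, Exx, E']
    have hc0' : ((lam k (ht x i + 1) : ℝ) : ℂ) ≠ 0 := by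
      exact_mod_cast ne_of_gt (lam_pos h3.1 h3.2)
    simp only [mul_zero, zero_mul, add_zero, zero_add]
    push_cast
    field_simp
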